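/- Let μ ≥ 1 and n_1, ..., n_{K̃} be positive integers with C = n_1 + ... + n_{K̃} ≤ μ. For each i ∈ [K̃] and k ∈ [n_i], let B_{i,k} ∈ ℂ^{μ×μ} be a deterministic diagonal matrix, and assume that for each i, every square submatrix of the μ × n_i matrix B_i = [B_{i,1}·1_μ, ..., B_{i,n_i}·1_μ] is invertible. Let Ξ_1, ..., Ξ_{K̃} be independent random μ-vectors with entries drawn i.i.d. from continuous distributions. Then the μ × C matrix Λ = [A_1, ..., A_{K̃}] with A_i = [B_{i,1}Ξ_i, ..., B_{i,n_i}Ξ_i] has full column rank C almost surely. -/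

import Mathlib

open MeasureTheory ProbabilityTheory

lemma measurable_mvpoly_eval {σ : Type*} [Fintype σ] (p : MvPolynomial σ ℂ) :
    Measurable fun v : σ → ℂ => MvPolynomial.eval v p := by
  classical
  simp only [MvPolynomial.eval_eq]
  exact Finset.measurable_sum _ fun d _ =>
    measurable_const.mul (Finset.measurable_prod _ fun i _ => (measurable_pi_apply i).pow_const _)

lemma mv_eval_split {S₁ S₂ : Type*} (f : S₁ → ℂ) (g : S₂ → ℂ)
    (P : MvPolynomial (S₁ ⊕ S₂) ℂ) :
    MvPolynomial.eval (Sum.elim f g) P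
      = MvPolynomial.eval f (MvPolynomial.map (MvPolynomial.eval g)
          (MvPolynomial.sumToIter ℂ S₁ S₂ P)) := by
  induction P using MvPolynomial.induction_on with
  | C a => simp [MvPolynomial.sumToIter_C]
  | add p q hp hq => simp [hp, hq]
  | mul_X p v hp =>
    cases v with
    | inl s => simp [hp, MvPolynomial.sumToIter_Xl]
    | inr t => simp [hp, MvPolynomial.sumToIter_Xr]

lemma iIndepFun_precomp {Ω : Type*} [MeasurableSpace Ω] {μ : Measure Ω}
    {ι ι' β : Type*} [MeasurableSpace β] {f : ι → Ω → β} (g : ι' → ι)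
    (hg : Function.Injective g)
    (h : iIndepFun f μ) :
    iIndepFun (fun i => f (g i)) μ := by
  classical
  rw [iIndepFun_iff_measure_inter_preimage_eq_mul] at h ⊢
  intro S sets H
  set sets' : ι → Set β := fun j => if hj : ∃ i ∈ S, g i = j then sets hj.choose else Set.univ
    with hsets'def
  have hsets' : ∀ i ∈ S, sets' (g i) = sets i := by
    intro i hi
    have hex : ∃ i' ∈ S, g i' = g i := ⟨i, hi, rfl⟩
    obtain ⟨h1, h2⟩ := hex.choose_spec
    simp only [hsets'def, dif_pos hex, hg h2]
  have key := h (S.image g) (sets := sets') (by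
    intro j hj
    simp only [Finset.mem_image] at hj
    obtain ⟨i, hi, rfl⟩ := hj
    rw [hsets' i hi]; exact H i hi)
  have h1 : (⋂ j ∈ S.image g, f j ⁻¹' sets' j) = ⋂ i ∈ S, f (g i) ⁻¹' sets i := by
    ext ω
    simp only [Set.mem_iInter, Finset.mem_image]
    constructor
    · intro hh i hi
      have := hh (g i) ⟨i, hi, rfl⟩
      rwa [hsets' i hi] at this
    · rintro hh j ⟨i, hi, rfl⟩
      rw [hsets' i hi]; exact hh i hi
  have h2 : (∏ j ∈ S.image g, μ (f j ⁻¹' sets' j)) = ∏ i ∈ S, μ (f (g i) ⁻¹' sets i) := by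
    rw [Finset.prod_image (fun i _ j _ hij => hg hij)]
    exact Finset.prod_congr rfl fun i hi => by rw [hsets' i hi]
  rw [h1, h2] at key
  exact key

def splitE (K mu : ℕ) : (Fin (K + 1) × Fin mu) ≃ (Fin mu ⊕ (Fin K × Fin mu)) where
  toFun v := if h : v.1 = Fin.last K then Sum.inl v.2 else Sum.inr (v.1.castPred h, v.2)
  invFun := Sum.elim (fun x => (Fin.last K, x)) (fun w => (w.1.castSucc, w.2))
  left_inv v := by
    rcases v with ⟨i, x⟩
    by_cases h : i = Fin.last K
    · simp [h]
    · simp [h, Fin.castSucc_castPred]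
  right_inv s := by
    rcases s with x | w
    · simp
    · simp [(Fin.castSucc_lt_last w.1).ne]

theorem aux_poly_zero (mu K : ℕ) {Ω : Type*} [MeasurableSpace Ω] (μ : Measure Ω)
    [IsProbabilityMeasure μ] :
    ∀ (Ξ : Fin K → Fin mu → Ω → ℂ),
      (∀ i x, Measurable (Ξ i x)) →
      iIndepFun (fun (i : Fin K) (ω : Ω) => fun x : Fin mu => Ξ i x ω) μ →
      (∀ (i : Fin K) (p : MvPolynomial (Fin mu) ℂ), p ≠ 0 →
        μ {ω | MvPolynomial.eval (fun x => Ξ i x ω) p = 0} = 0) →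
      ∀ (P : MvPolynomial (Fin K × Fin mu) ℂ), P ≠ 0 →
        μ {ω | MvPolynomial.eval (fun v => Ξ v.1 v.2 ω) P = 0} = 0 := by
  induction K with
  | zero =>
    intro Ξ _ _ _ P hP
    obtain ⟨c, rfl⟩ := MvPolynomial.C_surjective (Fin 0 × Fin mu) P
    have hc : c ≠ 0 := fun h => hP (by rw [h, map_zero])
    simp [MvPolynomial.eval_C, hc]
  | succ K IH =>
    intro Ξ hmeas hindep hpoly P hP
    classical
    set e := splitE K mu with he
    set P' : MvPolynomial (Fin mu ⊕ (Fin K × Fin mu)) ℂ := MvPolynomial.rename e P with hP'def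
    have hP' : P' ≠ 0 := fun h0 => hP <| by
      have := (MvPolynomial.rename_injective (R := ℂ) e e.injective)
      apply this
      rw [map_zero, ← hP'def]
      exact h0
    set Q := MvPolynomial.sumToIter ℂ (Fin mu) (Fin K × Fin mu) P' with hQdef
    have hQ : Q ≠ 0 := by
      intro h0
      apply hP'
      have : (MvPolynomial.sumRingEquiv ℂ (Fin mu) (Fin K × Fin mu)) P'
          = (MvPolynomial.sumRingEquiv ℂ (Fin mu) (Fin K × Fin mu)) 0 := by
        rw [map_zero]
        have e1 : ((MvPolynomial.sumRingEquiv ℂ (Fin mu) (Fin K × Fin mu)) :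
            MvPolynomial (Fin mu ⊕ (Fin K × Fin mu)) ℂ →+* _)
            = MvPolynomial.sumToIter ℂ (Fin mu) (Fin K × Fin mu) :=
          MvPolynomial.ringHom_ext (fun a => by simp [MvPolynomial.sumToIter_C])
            (fun v => by cases v <;> simp [MvPolynomial.sumToIter_Xl, MvPolynomial.sumToIter_Xr])
        exact (RingHom.congr_fun e1 P').trans h0
      exact (MvPolynomial.sumRingEquiv ℂ _ _).injective this
    -- random vectors
    set X : Ω → (Fin K × Fin mu → ℂ) := fun ω w => Ξ w.1.castSucc w.2 ω with hXdef
    set Y : Ω → (Fin mu → ℂ) := fun ω x => Ξ (Fin.last K) x ω with hYdef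
    have hXm : Measurable X := measurable_pi_lambda _ fun w => hmeas w.1.castSucc w.2
    have hYm : Measurable Y := measurable_pi_lambda _ fun x => hmeas (Fin.last K) x
    -- independence
    have hIndepXY : IndepFun X Y μ := by
      have hd : Disjoint (Finset.univ.image (Fin.castSucc : Fin K → Fin (K + 1)))
          ({Fin.last K} : Finset (Fin (K + 1))) := by
        simp only [Finset.disjoint_right, Finset.mem_singleton, Finset.mem_image]
        rintro j rfl ⟨i, _, hi⟩
        exact (Fin.castSucc_lt_last i).ne hi
      have h0 := hindep.indepFun_finset
        (Finset.univ.image (Fin.castSucc : Fin K → Fin (K + 1)))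
        ({Fin.last K} : Finset (Fin (K + 1))) hd
        (fun i => measurable_pi_lambda _ fun x => hmeas i x)
      have hφ : Measurable
          (fun (t : (j : {x // x ∈ Finset.univ.image (Fin.castSucc : Fin K → Fin (K+1))}) →
              (Fin mu → ℂ)) (w : Fin K × Fin mu) =>
            t ⟨w.1.castSucc, Finset.mem_image_of_mem _ (Finset.mem_univ _)⟩ w.2) :=
        measurable_pi_lambda _ fun w =>
          (measurable_pi_apply w.2).comp (measurable_pi_apply _)
      have hψ : Measurable
          (fun (t : (j : {x // x ∈ ({Fin.last K} : Finset (Fin (K+1)))}) → (Fin mu → ℂ)) =>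
            t ⟨Fin.last K, by simp⟩) := measurable_pi_apply _
      exact h0.comp hφ hψ
    -- measurable eval function on pairs
    set G : ((Fin K × Fin mu → ℂ) × (Fin mu → ℂ)) → (Fin mu ⊕ (Fin K × Fin mu) → ℂ) :=
      fun ab => Sum.elim ab.2 ab.1 with hGdef
    have hGm : Measurable G := by
      apply measurable_pi_lambda
      rintro (x | w)
      · exact (measurable_pi_apply x).comp measurable_snd
      · exact (measurable_pi_apply w).comp measurable_fst
    set Sset : Set ((Fin K × Fin mu → ℂ) × (Fin mu → ℂ)) :=
      {ab | MvPolynomial.eval (G ab) P' = 0} with hSdef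
    have hSm : MeasurableSet Sset :=
      ((measurable_mvpoly_eval P').comp hGm) (measurableSet_singleton 0)
    -- set identification
    have hset : {ω | MvPolynomial.eval (fun v => Ξ v.1 v.2 ω) P = 0}
        = (fun ω => (X ω, Y ω)) ⁻¹' Sset := by
      ext ω
      simp only [Set.mem_setOf_eq, Set.mem_preimage, hSdef, hGdef, hP'def,
        MvPolynomial.eval_rename]
      have : (Sum.elim (Y ω) (X ω)) ∘ e = fun v : Fin (K+1) × Fin mu => Ξ v.1 v.2 ω := by
        funext v
        rcases v with ⟨i, x⟩
        by_cases h : i = Fin.last K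
        · subst h; simp [he, splitE, hYdef]
        · simp only [he, splitE, Function.comp_apply, Equiv.coe_fn_mk, dif_neg h, Sum.elim_inr]
          simp [hXdef, Fin.castSucc_castPred]
      rw [this]
    haveI : IsProbabilityMeasure (μ.map Y) := Measure.isProbabilityMeasure_map hYm.aemeasurable
    haveI : IsProbabilityMeasure (μ.map X) := Measure.isProbabilityMeasure_map hXm.aemeasurable
    have hmap : μ.map (fun ω => (X ω, Y ω)) = (μ.map X).prod (μ.map Y) :=
      (indepFun_iff_map_prod_eq_prod_map_map hXm.aemeasurable hYm.aemeasurable).mp hIndepXY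
    rw [hset, ← Measure.map_apply (hXm.prodMk hYm) hSm, hmap, Measure.prod_apply hSm]
    -- choose a nonzero coefficient of Q
    obtain ⟨d, hd⟩ := MvPolynomial.ne_zero_iff.mp hQ
    set Z : Set (Fin K × Fin mu → ℂ) :=
      {a | MvPolynomial.eval a (MvPolynomial.coeff d Q) = 0} with hZdef
    have hZm : MeasurableSet Z :=
      (measurable_mvpoly_eval _) (measurableSet_singleton 0)
    have hZ0 : μ.map X Z = 0 := by
      rw [Measure.map_apply hXm hZm]
      exact IH (fun i x => Ξ i.castSucc x) (fun i x => hmeas i.castSucc x)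
        (iIndepFun_precomp Fin.castSucc (Fin.castSucc_injective K) hindep)
        (fun i p hp => hpoly i.castSucc p hp) (MvPolynomial.coeff d Q) hd
    have hae : ∀ᵐ a ∂(μ.map X), (μ.map Y) (Prod.mk a ⁻¹' Sset) = 0 := by
      have h1 : ∀ᵐ a ∂(μ.map X), a ∉ Z := by
        rw [ae_iff]
        convert hZ0 using 2
        ext a; simp
      filter_upwards [h1] with a ha
      set pa := MvPolynomial.map (MvPolynomial.eval a) Q with hpadef
      have hpane : pa ≠ 0 := by
        intro h0
        apply ha
        have := congrArg (MvPolynomial.coeff d) h0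
        rw [hpadef, MvPolynomial.coeff_map] at this
        simpa [hZdef] using this
      have hslice : Prod.mk a ⁻¹' Sset = {b | MvPolynomial.eval b pa = 0} := by
        ext b
        simp only [Set.mem_preimage, hSdef, Set.mem_setOf_eq, hGdef]
        rw [mv_eval_split b a P']
      have hm : MeasurableSet {b : Fin mu → ℂ | MvPolynomial.eval b pa = 0} :=
        (measurable_mvpoly_eval pa) (measurableSet_singleton 0)
      rw [hslice, Measure.map_apply hYm hm]
      exact hpoly (Fin.last K) pa hpane
    rw [lintegral_congr_ae hae, lintegral_zero]

theorem diagonal_IA_matrix_full_rank_as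
    (mu KT : ℕ) (hmu : 1 ≤ mu) (n : Fin KT → ℕ) (hn : ∀ i, 1 ≤ n i)
    (hC : ∑ i, n i ≤ mu)
    (B : (i : Fin KT) → Fin (n i) → Matrix (Fin mu) (Fin mu) ℂ)
    (hdiag : ∀ i k, (B i k).IsDiag)
    -- every square submatrix of B_i = [B_{i,1}·1, ..., B_{i,n_i}·1] is invertible
    (hsub : ∀ (i : Fin KT) (d : ℕ) (r : Fin d → Fin mu) (c : Fin d → Fin (n i)),
      Function.Injective r → Function.Injective c →
      (Matrix.of fun a b => B i (c b) (r a) (r a)).det ≠ 0)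
    {Ω : Type*} [MeasurableSpace Ω] (μ : Measure Ω) [IsProbabilityMeasure μ]
    (Ξ : Fin KT → Fin mu → Ω → ℂ)
    (hmeas : ∀ i x, Measurable (Ξ i x))
    (hindep : iIndepFun
      (fun (i : Fin KT) (ω : Ω) => fun x : Fin mu => Ξ i x ω) μ)
    -- the law of each vector Ξ_i puts no mass on the zero set of a nonzero polynomial
    (hpoly : ∀ (i : Fin KT) (p : MvPolynomial (Fin mu) ℂ), p ≠ 0 →
      μ {ω | MvPolynomial.eval (fun x => Ξ i x ω) p = 0} = 0) :
    ∀ᵐ ω ∂μ,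
      (Matrix.of fun (x : Fin mu) (q : (i : Fin KT) × Fin (n i)) =>
        B q.1 q.2 x x * Ξ q.1 x ω).rank = ∑ i, n i := by
  classical
  set ι := (i : Fin KT) × Fin (n i) with hιdef
  have hcard : Fintype.card ι = ∑ i, n i := by
    simp [hιdef, Fintype.card_sigma]
  obtain ⟨r⟩ : Nonempty (ι ↪ Fin mu) :=
    Function.Embedding.nonempty_of_card_le (by simpa [hcard] using hC)
  set M : Matrix ι ι (MvPolynomial (Fin KT × Fin mu) ℂ) :=
    Matrix.of fun a b => MvPolynomial.C (B b.1 b.2 (r a) (r a))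
      * MvPolynomial.X (b.1, r a) with hMdef
  set P : MvPolynomial (Fin KT × Fin mu) ℂ := M.det with hPdef
  -- P is not the zero polynomial
  have hPne : P ≠ 0 := by
    intro h0
    set ξ : Fin KT × Fin mu → ℂ :=
      fun v => if ∃ k : Fin (n v.1), r ⟨v.1, k⟩ = v.2 then (1 : ℂ) else 0 with hξdef
    have hev : MvPolynomial.eval ξ P = (M.map (MvPolynomial.eval ξ)).det :=
      RingHom.map_det (MvPolynomial.eval ξ) M
    set N : Matrix ι ι ℂ := M.map (MvPolynomial.eval ξ) with hNdef
    have hNentry : ∀ a b : ι, N a b = B b.1 b.2 (r a) (r a) * ξ (b.1, r a) := by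
      intro a b
      simp [hNdef, hMdef]
    have hNzero : ∀ a b : ι, a.1 ≠ b.1 → N a b = 0 := by
      intro a b hab
      rw [hNentry]
      have : ξ (b.1, r a) = 0 := by
        rw [hξdef]
        exact if_neg (by rintro ⟨k, hk⟩; exact hab (congrArg Sigma.fst (r.injective hk)).symm)
      rw [this, mul_zero]
    have hBT : N.BlockTriangular Sigma.fst := fun a b hlt => hNzero a b (ne_of_gt hlt)
    have hblocks : ∀ k : Fin KT, (N.toSquareBlock Sigma.fst k).det ≠ 0 := by
      intro k
      set ek : Fin (n k) ≃ {a : ι // a.1 = k} :=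
        { toFun := fun x => ⟨⟨k, x⟩, rfl⟩
          invFun := fun a => a.2 ▸ a.1.2
          left_inv := fun x => rfl
          right_inv := by rintro ⟨⟨i, x⟩, h⟩; subst h; rfl } with hekdef
      rw [← Matrix.det_submatrix_equiv_self ek]
      have hEq : (N.toSquareBlock Sigma.fst k).submatrix ek ek
          = Matrix.of fun x y : Fin (n k) => B k (id y) (r ⟨k, x⟩) (r ⟨k, x⟩) := by
        ext x y
        have h1 : ξ (k, r ⟨k, x⟩) = 1 := by
          rw [hξdef]; exact if_pos ⟨x, rfl⟩
        simp only [Matrix.submatrix_apply, Matrix.toSquareBlock_def, Matrix.of_apply, hekdef,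
          Equiv.coe_fn_mk]
        rw [hNentry]
        simp [h1]
      rw [hEq]
      exact hsub k (n k) (fun x => r ⟨k, x⟩)
        (fun y => y) (fun x y h => by
          have h2 := r.injective h
          exact eq_of_heq (Sigma.mk.inj_iff.mp h2).2) (fun a b h => h)
    have : MvPolynomial.eval ξ P ≠ 0 := by
      rw [hev, hBT.det]
      refine Finset.prod_ne_zero_iff.mpr fun k _ => hblocks k
    rw [h0, map_zero] at this
    exact this rfl
  have haux := aux_poly_zero mu KT μ Ξ hmeas hindep hpoly P hPne
  have hae : ∀ᵐ ω ∂μ, MvPolynomial.eval (fun v : Fin KT × Fin mu => Ξ v.1 v.2 ω) P ≠ 0 := by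
    rw [ae_iff]
    convert haux using 2
    ext ω; simp
  filter_upwards [hae] with ω hω
  set A : Matrix (Fin mu) ι ℂ :=
    Matrix.of fun x (q : ι) => B q.1 q.2 x x * Ξ q.1 x ω with hAdef
  have hAsubdet : (A.submatrix r id).det ≠ 0 := by
    have : A.submatrix r id = M.map (MvPolynomial.eval (fun v => Ξ v.1 v.2 ω)) := by
      ext a b
      simp [hAdef, hMdef]
    rw [this]
    have hev2 : MvPolynomial.eval (fun v => Ξ v.1 v.2 ω) P
        = (M.map (MvPolynomial.eval fun v => Ξ v.1 v.2 ω)).det := RingHom.map_det _ M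
    rw [← hev2]
    exact hω
  have hU : IsUnit (A.submatrix r id) :=
    (Matrix.isUnit_iff_isUnit_det _).mpr (isUnit_iff_ne_zero.mpr hAsubdet)
  have hinj : Function.Injective A.mulVecLin := by
    rw [← LinearMap.ker_eq_bot, LinearMap.ker_eq_bot']
    intro v hv
    have hsubv : (A.submatrix r id).mulVec v = 0 := by
      funext a
      have : (A.submatrix r id).mulVec v a = A.mulVec v (r a) := rfl
      rw [this]
      rw [show A.mulVec v = 0 from hv]
      rfl
    have := Matrix.mulVec_injective_iff_isUnit.mpr hU
    apply this
    rw [hsubv, Matrix.mulVec_zero]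
  have : A.rank = Fintype.card ι := by
    rw [Matrix.rank, LinearMap.finrank_range_of_inj hinj]
    simp [Module.finrank_fintype_fun_eq_card]
  exact this.trans hcard
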